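/- For every w ∈ W_G one has ⟨w·δ_G, δ_K⟩ ≤ ⟨δ_G, δ_K⟩ − Σ_{θ∈Λ} ⟨θ, δ_K⟩ (with the convention that the sum is 0 when Λ is empty). -/

import Mathlib

open scoped RealInnerProductSpace

/-- The reflection in the hyperplane orthogonal to `α`. -/
noncomputable def rootReflection {V : Type*} [NormedAddCommGroup V] [InnerProductSpace ℝ V]
    [FiniteDimensional ℝ V] (α : V) : V ≃ₗᵢ[ℝ] V :=
  Submodule.reflection ((ℝ ∙ α)ᗮ)

/-- The Weyl group: the group generated by the reflections in the roots. -/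
noncomputable def weylGroup {V : Type*} [NormedAddCommGroup V] [InnerProductSpace ℝ V]
    [FiniteDimensional ℝ V] (Φ : Finset V) : Subgroup (V ≃ₗᵢ[ℝ] V) :=
  Subgroup.closure { w | ∃ α ∈ Φ, w = rootReflection α }

theorem stmt4 {V : Type*} [NormedAddCommGroup V] [InnerProductSpace ℝ V] [FiniteDimensional ℝ V]
    (Φ : Finset V) (hΦ0 : (0 : V) ∉ Φ)
    (hspan : Submodule.span ℝ (Φ : Set V) = ⊤)
    (hred : ∀ α ∈ Φ, ∀ t : ℝ, t • α ∈ Φ → t = 1 ∨ t = -1)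
    (hrefl : ∀ α ∈ Φ, ∀ β ∈ Φ, rootReflection α β ∈ Φ)
    (ΦGp : Finset V)
    (hΦGp : ∃ f : V →ₗ[ℝ] ℝ, (∀ α ∈ Φ, f α ≠ 0) ∧ ∀ α, α ∈ ΦGp ↔ α ∈ Φ ∧ 0 < f α)
    (δG : V) (hδG : δG = (2⁻¹ : ℝ) • ∑ α ∈ ΦGp, α)
    (ΦK : Finset V) (hΦKsub : ΦK ⊆ Φ)
    (hΦKneg : ∀ α ∈ ΦK, -α ∈ ΦK)
    (hΦKrefl : ∀ α ∈ ΦK, ∀ β ∈ ΦK, rootReflection α β ∈ ΦK)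
    (ΦKp : Finset V) (hΦKp : ∀ α, α ∈ ΦKp ↔ α ∈ ΦK ∧ α ∈ ΦGp)
    (δK : V) (hδK : δK = (2⁻¹ : ℝ) • ∑ α ∈ ΦKp, α)
    (Λ : Finset V) (hΛ : ∀ θ, θ ∈ Λ ↔ θ ∈ ΦGp ∧ ⟪θ, δK⟫ < 0) :
    ∀ w ∈ weylGroup Φ, ⟪w δG, δK⟫ ≤ ⟪δG, δK⟫ - ∑ θ ∈ Λ, ⟪θ, δK⟫ := by
  classical
  obtain ⟨f, hf0, hfΦ⟩ := hΦGp
  -- every element of the Weyl group permutes Φ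
  have himg : ∀ w ∈ weylGroup Φ, Φ.image (⇑w) = Φ := by
    intro w hw
    induction hw using Subgroup.closure_induction with
    | mem x hx =>
      obtain ⟨α, hα, rfl⟩ := hx
      apply Finset.eq_of_subset_of_card_le
      · intro β hβ
        obtain ⟨γ, hγ, rfl⟩ := Finset.mem_image.1 hβ
        exact hrefl α hα γ hγ
      · rw [Finset.card_image_of_injective _ (rootReflection α).injective]
    | one => simp
    | mul x y hx hy ihx ihy =>
      calc Φ.image ⇑(x * y) = (Φ.image ⇑y).image ⇑x := by
            rw [Finset.image_image]; rfl
        _ = Φ := by rw [ihy, ihx]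
    | inv x hx ih =>
      conv_lhs => rw [← ih]
      rw [Finset.image_image]
      have : (⇑x⁻¹ ∘ ⇑x) = id := by funext v; simp
      rw [this, Finset.image_id]
  intro w hw
  have hΦGpΦ : ΦGp ⊆ Φ := fun α hα => ((hfΦ α).1 hα).1
  -- Φ is closed under negation
  have hΦneg : ∀ α ∈ Φ, -α ∈ Φ := by
    intro α hα
    have h := hrefl α hα α hα
    rwa [rootReflection, Submodule.reflection_mem_subspace_orthogonalComplement_eq_neg
      (Submodule.le_orthogonal_orthogonal _ (Submodule.mem_span_singleton_self α))] at h
  set P : Finset V := ΦGp.image ⇑w with hP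
  have hPsub : P ⊆ Φ := by
    rw [← himg w hw]
    exact Finset.image_subset_image hΦGpΦ
  -- membership in P
  have hmemP : ∀ β : V, β ∈ P ↔ w⁻¹ β ∈ ΦGp := by
    intro β
    constructor
    · intro hβ
      rw [hP] at hβ
      obtain ⟨γ, hγ, rfl⟩ := Finset.mem_image.1 hβ
      simpa using hγ
    · intro h
      have hβ : β = w (w⁻¹ β) := by simp
      rw [hP, hβ]
      exact Finset.mem_image_of_mem _ h
  have hinvΦ : ∀ β ∈ Φ, w⁻¹ β ∈ Φ := by
    intro β hβ
    rw [← himg _ ((weylGroup Φ).inv_mem hw)]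
    exact Finset.mem_image_of_mem _ hβ
  -- for β in Φ, exactly one of β, -β lies in ΦGp
  have hone : ∀ β ∈ Φ, (β ∈ ΦGp ↔ ¬(-β ∈ ΦGp)) := by
    intro β hβ
    rw [hfΦ β, hfΦ (-β)]
    have h1 : f β ≠ 0 := hf0 β hβ
    have h2 : -β ∈ Φ := hΦneg β hβ
    simp only [map_neg]
    constructor
    · rintro ⟨-, h⟩ ⟨-, h'⟩; linarith
    · intro h
      refine ⟨hβ, ?_⟩
      rcases lt_or_gt_of_ne h1 with hlt | hgt
      · exact absurd ⟨h2, by linarith⟩ h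
      · exact hgt
  -- for β in Φ, exactly one of β, -β lies in P
  have honeP : ∀ β ∈ Φ, (β ∈ P ↔ ¬(-β ∈ P)) := by
    intro β hβ
    rw [hmemP β, hmemP (-β), map_neg]
    exact hone _ (hinvΦ β hβ)
  set N : Finset V := ΦGp.filter (fun θ => θ ∉ P) with hN
  -- decompose P
  have hPdecomp : P = (ΦGp.filter (fun θ => θ ∈ P)) ∪ N.image (fun θ => -θ) := by
    ext β
    simp only [Finset.mem_union, Finset.mem_filter, Finset.mem_image, hN]
    constructor
    · intro hβ
      by_cases hβG : β ∈ ΦGp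
      · exact Or.inl ⟨hβG, hβ⟩
      · refine Or.inr ⟨-β, ⟨?_, (honeP β (hPsub hβ)).1 hβ⟩, by simp⟩
        by_contra h
        exact hβG ((hone β (hPsub hβ)).2 h)
    · rintro (⟨-, h⟩ | ⟨θ, ⟨hθG, hθP⟩, rfl⟩)
      · exact h
      · by_contra h
        exact hθP ((honeP θ (hΦGpΦ hθG)).2 h)
  have hdisj : Disjoint (ΦGp.filter (fun θ => θ ∈ P)) (N.image (fun θ => -θ)) := by
    rw [Finset.disjoint_left]
    rintro β hβ hβ'
    obtain ⟨θ, hθ, rfl⟩ := Finset.mem_image.1 hβ'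
    have h1 : 0 < f (-θ) := ((hfΦ _).1 (Finset.mem_filter.1 hβ).1).2
    have h2 : 0 < f θ := ((hfΦ _).1 (Finset.mem_filter.1 hθ).1).2
    rw [map_neg] at h1
    linarith
  -- sum over P
  have hsumP : ∑ β ∈ P, β = (∑ α ∈ ΦGp, α) - (∑ θ ∈ N, θ) - (∑ θ ∈ N, θ) := by
    have hinj : Set.InjOn (fun θ : V => -θ) N := fun a _ b _ h => by
      simpa using h
    rw [hPdecomp, Finset.sum_union hdisj, Finset.sum_image (fun a ha b hb => hinj ha hb),
      Finset.sum_neg_distrib]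
    have := Finset.sum_filter_add_sum_filter_not ΦGp (fun θ => θ ∈ P) (fun θ => θ)
    rw [← hN] at this
    rw [← this]
    abel
  -- w δG in terms of the sums
  have hwδG : w δG = δG - ∑ θ ∈ N, θ := by
    rw [hδG, map_smul, map_sum]
    have : ∑ β ∈ P, β = ∑ α ∈ ΦGp, w α :=
      Finset.sum_image (fun a _ b _ h => w.injective h)
    rw [← this, hsumP]
    rw [smul_sub, smul_sub, ← hδG]
    have : (2⁻¹ : ℝ) • (∑ θ ∈ N, θ) + (2⁻¹ : ℝ) • (∑ θ ∈ N, θ) = ∑ θ ∈ N, θ := by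
      rw [← add_smul]; norm_num
    rw [sub_sub, this]
  -- compute the inner product
  rw [hwδG, inner_sub_left, sum_inner]
  have hΛN : ∑ θ ∈ Λ, ⟪θ, δK⟫ ≤ ∑ θ ∈ N, ⟪θ, δK⟫ := by
    have h1 : ∑ θ ∈ Λ, ⟪θ, δK⟫ ≤ ∑ θ ∈ Λ.filter (fun θ => θ ∈ N), ⟪θ, δK⟫ := by
      have := Finset.sum_filter_add_sum_filter_not Λ (fun θ => θ ∈ N) (fun θ => ⟪θ, δK⟫)
      have h2 : ∑ θ ∈ Λ.filter (fun θ => θ ∉ N), ⟪θ, δK⟫ ≤ 0 := by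
        apply Finset.sum_nonpos
        intro θ hθ
        exact le_of_lt ((hΛ θ).1 (Finset.mem_filter.1 hθ).1).2
      linarith
    have h2 : ∑ θ ∈ Λ.filter (fun θ => θ ∈ N), ⟪θ, δK⟫ ≤ ∑ θ ∈ N, ⟪θ, δK⟫ := by
      apply Finset.sum_le_sum_of_subset_of_nonneg
      · intro θ hθ
        exact (Finset.mem_filter.1 hθ).2
      · intro θ hθN hθ
        by_contra h
        push_neg at h
        have hθΛ : θ ∈ Λ := (hΛ θ).2 ⟨(Finset.mem_filter.1 hθN).1, h⟩
        exact hθ (Finset.mem_filter.2 ⟨hθΛ, hθN⟩)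
    linarith
  linarith
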